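/- Let q be a prime and let f_1, ..., f_t ∈ F_q[X] be polynomials such that deg(f_i) ≢ deg(f_j) (mod q) for all i ≠ j. Then the Wronskian matrix W(f_1,...,f_t), whose (i,j) entry is the i-th Hasse derivative f_j^{(i)}(X) for 0 ≤ i ≤ t−1 and 1 ≤ j ≤ t, has nonzero determinant in F_q[X]. -/

import Mathlib

open Polynomial Finset

lemma coeff_prod_of_natDegree_le'' {R : Type*} [CommSemiring R] {ι : Type*} (s : Finset ι)
    (g : ι → Polynomial R) (d : ι → ℕ) (h : ∀ i ∈ s, (g i).natDegree ≤ d i) :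
    (∏ i ∈ s, g i).coeff (∑ i ∈ s, d i) = ∏ i ∈ s, (g i).coeff (d i) := by
  induction s using Finset.cons_induction with
  | empty => simp
  | cons a s ha ih =>
    rw [Finset.prod_cons, Finset.sum_cons, Finset.prod_cons,
      Polynomial.coeff_mul_add_eq_of_natDegree_le (h a (Finset.mem_cons_self a s))
        ((Polynomial.natDegree_prod_le _ _).trans
          (Finset.sum_le_sum fun i hi => h i (Finset.mem_cons_of_mem hi))),
      ih fun i hi => h i (Finset.mem_cons_of_mem hi)]

lemma lucas_small {q : ℕ} [Fact q.Prime] {m i : ℕ} (hi : i < q) :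
    ((m.choose i : ℕ) : ZMod q) = (((m % q).choose i : ℕ) : ZMod q) := by
  have h := (Choose.choose_modEq_choose_mod_mul_choose_div_nat (p := q) (n := m) (k := i))
  rw [ZMod.natCast_eq_natCast_iff]
  simpa [Nat.mod_eq_of_lt hi, Nat.div_eq_of_lt hi] using h

theorem stmt_1 (q t : ℕ) [Fact q.Prime] (f : Fin t → Polynomial (ZMod q))
    (hf : ∀ j, f j ≠ 0)
    (hdeg : ∀ i j, i ≠ j → (f i).natDegree % q ≠ (f j).natDegree % q) :
    Matrix.det (Matrix.of fun i j : Fin t => Polynomial.hasseDeriv (i : ℕ) (f j)) ≠ 0 := by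
  have hq : q.Prime := Fact.out
  set n : Fin t → ℕ := fun j => (f j).natDegree with hn
  -- t ≤ q
  have htq : t ≤ q := by
    have hinj : Function.Injective (fun j : Fin t => (⟨n j % q, Nat.mod_lt _ hq.pos⟩ : Fin q)) := by
      intro i j h
      by_contra hne
      exact hdeg i j hne (by simpa using congrArg Fin.val h)
    simpa using Fintype.card_le_of_injective _ hinj
  set D : ℕ := (∑ j, n j) - ∑ j : Fin t, (j : ℕ) with hD
  set B : Matrix (Fin t) (Fin t) (ZMod q) :=
    Matrix.of fun i j : Fin t => (f j).leadingCoeff * (((n j).choose (i : ℕ) : ℕ) : ZMod q) with hB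
  -- the coefficient of the determinant at degree D equals det B
  have hcoeff :
      (Matrix.det (Matrix.of fun i j : Fin t => Polynomial.hasseDeriv (i : ℕ) (f j))).coeff D
        = Matrix.det B := by
    rw [Matrix.det_apply, Matrix.det_apply, Polynomial.finset_sum_coeff]
    refine Finset.sum_congr rfl fun σ _ => ?_
    rw [Polynomial.coeff_smul]
    congr 1
    by_cases hgood : ∀ j, (σ j : ℕ) ≤ n j
    · have hsum : D = ∑ j, (n j - (σ j : ℕ)) := by
        rw [Finset.sum_tsub_distrib _ fun j _ => hgood j, hD]
        congr 1
        exact (Equiv.sum_comp σ (fun j : Fin t => (j : ℕ))).symm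
      simp only [Matrix.of_apply]
      rw [hsum, coeff_prod_of_natDegree_le'' Finset.univ
        (fun j => Polynomial.hasseDeriv ((σ j : Fin t) : ℕ) (f j))
        (fun j => n j - ((σ j : Fin t) : ℕ))
        (fun j _ => Polynomial.natDegree_hasseDeriv_le _ _)]
      refine Finset.prod_congr rfl fun j _ => ?_
      rw [Polynomial.hasseDeriv_coeff, Nat.sub_add_cancel (hgood j), mul_comm]
      rfl
    · push_neg at hgood
      obtain ⟨j, hj⟩ := hgood
      have h1 : Matrix.of (fun i j : Fin t => Polynomial.hasseDeriv (i : ℕ) (f j)) (σ j) j = 0 := by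
        exact Polynomial.hasseDeriv_eq_zero_of_lt_natDegree _ _ hj
      have h2 : B (σ j) j = 0 := by
        simp [hB, Nat.choose_eq_zero_of_lt hj]
      have hz1 : (∏ i, Matrix.of (fun i j : Fin t => Polynomial.hasseDeriv (i : ℕ) (f j)) (σ i) i)
          = 0 := Finset.prod_eq_zero (Finset.mem_univ j) h1
      have hz2 : (∏ i, B (σ i) i) = 0 := Finset.prod_eq_zero (Finset.mem_univ j) h2
      rw [hz1, hz2, Polynomial.coeff_zero]
  -- det B ≠ 0
  have hBne : Matrix.det B ≠ 0 := by
    have hlc : ∀ j, (f j).leadingCoeff ≠ 0 := fun j => Polynomial.leadingCoeff_ne_zero.mpr (hf j)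
    rw [hB, Matrix.det_mul_row (fun j => (f j).leadingCoeff)
      (fun i j : Fin t => (((n j).choose (i : ℕ) : ℕ) : ZMod q))]
    refine mul_ne_zero (Finset.prod_ne_zero_iff.mpr fun j _ => hlc j) ?_
    -- rewrite via Lucas
    have hC : (Matrix.of fun i j : Fin t => (((n j).choose (i : ℕ) : ℕ) : ZMod q))
        = Matrix.transpose (Matrix.of fun i j : Fin t => (((n i % q).choose (j : ℕ) : ℕ) : ZMod q)) := by
      ext i j
      simp only [Matrix.of_apply, Matrix.transpose_apply]
      exact lucas_small (lt_of_lt_of_le i.isLt htq)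
    show Matrix.det (Matrix.of fun i j : Fin t => (((n j).choose (i : ℕ) : ℕ) : ZMod q)) ≠ 0
    rw [hC, Matrix.det_transpose]
    set v : Fin t → ZMod q := fun i => ((n i % q : ℕ) : ZMod q) with hv
    have hvinj : Function.Injective v := by
      intro i j h
      have : n i % q = n j % q := by
        have hi := ZMod.val_cast_of_lt (a := n i % q) (Nat.mod_lt _ hq.pos)
        have hj := ZMod.val_cast_of_lt (a := n j % q) (Nat.mod_lt _ hq.pos)
        have h' := congrArg ZMod.val h
        rw [show (v i).val = n i % q from hi, show (v j).val = n j % q from hj] at h'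
        exact h'
      by_contra hne
      exact hdeg i j hne this
    have key : Matrix.det (Matrix.of fun i j : Fin t =>
        eval (v i) (descPochhammer (ZMod q) (j : ℕ))) ≠ 0 := by
      rw [← Matrix.det_eval_matrixOfPolynomials_eq_det_vandermonde v
        (fun j : Fin t => descPochhammer (ZMod q) (j : ℕ))
        (fun j => descPochhammer_natDegree _ _) (fun j => monic_descPochhammer _ _)]
      exact Matrix.det_vandermonde_ne_zero_iff.mpr hvinj
    have heval : ∀ i j : Fin t, eval (v i) (descPochhammer (ZMod q) (j : ℕ))
        = ((j : ℕ).factorial : ZMod q) * (((n i % q).choose (j : ℕ) : ℕ) : ZMod q) := by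
      intro i j
      rw [hv, descPochhammer_eval_eq_descFactorial,
        Nat.descFactorial_eq_factorial_mul_choose, Nat.cast_mul]
    have hfac : ∀ j : Fin t, ((j : ℕ).factorial : ZMod q) ≠ 0 := by
      intro j
      rw [Ne, ZMod.natCast_eq_zero_iff, hq.dvd_factorial]
      omega
    have hmat : (Matrix.of fun i j : Fin t => eval (v i) (descPochhammer (ZMod q) (j : ℕ)))
        = Matrix.of fun i j : Fin t => ((j : ℕ).factorial : ZMod q)
          * (((n i % q).choose (j : ℕ) : ℕ) : ZMod q) := by
      ext i j
      exact heval i j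
    have := key
    rw [hmat, Matrix.det_mul_row (fun j : Fin t => ((j : ℕ).factorial : ZMod q))
      (fun i j : Fin t => (((n i % q).choose (j : ℕ) : ℕ) : ZMod q))] at this
    exact fun h => this (mul_eq_zero_of_right _ h)
  intro h
  rw [h, Polynomial.coeff_zero] at hcoeff
  exact hBne hcoeff.symm
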